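/- Let X and Y be Banach spaces and let G ∈ L(X,Y) with ‖G‖ = 1. Define C := { ψ ∈ B_{L(X,Y)*} : there exists a net (x_α, y_α*) in S_X × S_{Y*} with ‖G x_α‖ → 1 and ψ_{x_α, y_α*} → ψ in the weak* topology }. Then the set { φ ∈ L(X,Y)* : |φ(T)| ≤ ‖T‖_G for all T ∈ L(X,Y) } (i.e., the unit ball of the dual of (L(X,Y), ‖·‖_G)) equals the weak*-closed convex hull of C. -/

import Mathlib

open Filter Topology

universe u v w

variable {𝕜 : Type u} [RCLike 𝕜]

/-- The `G`-norm of an operator `T`: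
`‖T‖_G := inf_{δ>0} sup {‖Tx‖ : x ∈ S_X, ‖Gx‖ > 1 - δ}`. -/
noncomputable def Gnorm {X Y : Type*} [NormedAddCommGroup X] [NormedSpace 𝕜 X]
    [NormedAddCommGroup Y] [NormedSpace 𝕜 Y] (G T : X →L[𝕜] Y) : ℝ :=
  ⨅ δ : {δ : ℝ // 0 < δ},
    sSup {r : ℝ | ∃ x : X, ‖x‖ = 1 ∧ 1 - (δ : ℝ) < ‖G x‖ ∧ r = ‖T x‖}

/-- The set `C` of functionals `ψ` in the unit ball of `L(X,Y)*` that are weak* limits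
of a net of functionals `ψ_{x_α, y_α*} = y_α* ⊗ x_α` with `x_α ∈ S_X`, `y_α* ∈ S_{Y*}`
and `‖G x_α‖ → 1`. -/
def Cset {X : Type v} {Y : Type w} [NormedAddCommGroup X] [NormedSpace 𝕜 X]
    [NormedAddCommGroup Y] [NormedSpace 𝕜 Y] (G : X →L[𝕜] Y) :
    Set ((X →L[𝕜] Y) →L[𝕜] 𝕜) :=
  {ψ | ‖ψ‖ ≤ 1 ∧ ∃ (ι : Type (max u v w)) (l : Filter ι), l.NeBot ∧
    ∃ (x : ι → X) (y : ι → (Y →L[𝕜] 𝕜)),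
      (∀ i, ‖x i‖ = 1) ∧ (∀ i, ‖y i‖ = 1) ∧
      Tendsto (fun i => ‖G (x i)‖) l (𝓝 1) ∧
      (∀ S : X →L[𝕜] Y, Tendsto (fun i => (y i) (S (x i))) l (𝓝 (ψ S)))}

section Aux

variable {X : Type v} {Y : Type w} [NormedAddCommGroup X] [NormedSpace 𝕜 X]
    [NormedAddCommGroup Y] [NormedSpace 𝕜 Y]

/-- The set whose supremum appears in the definition of the `G`-norm. -/
def gSet (G T : X →L[𝕜] Y) (δ : ℝ) : Set ℝ :=
  {r : ℝ | ∃ x : X, ‖x‖ = 1 ∧ 1 - δ < ‖G x‖ ∧ r = ‖T x‖}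

lemma Gnorm_eq (G T : X →L[𝕜] Y) :
    Gnorm G T = ⨅ δ : {δ : ℝ // 0 < δ}, sSup (gSet G T (δ : ℝ)) := rfl

lemma gSet_bddAbove (G T : X →L[𝕜] Y) (δ : ℝ) : BddAbove (gSet G T δ) := by
  refine ⟨‖T‖, ?_⟩
  rintro r ⟨x, hx, -, rfl⟩
  calc ‖T x‖ ≤ ‖T‖ * ‖x‖ := T.le_opNorm x
    _ = ‖T‖ := by rw [hx, mul_one]

lemma exists_unit_vector (G : X →L[𝕜] Y) (hG : ‖G‖ = 1) {δ : ℝ} (hδ : 0 < δ) :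
    ∃ x : X, ‖x‖ = 1 ∧ 1 - δ < ‖G x‖ := by
  have hGne : G ≠ 0 := by
    intro h
    rw [h, norm_zero] at hG
    norm_num at hG
  obtain ⟨x₀, hx₀⟩ : ∃ x : X, G x ≠ 0 := by
    by_contra h
    push_neg at h
    exact hGne (ContinuousLinearMap.ext fun x => by simp [h x])
  have hx₀ne : x₀ ≠ 0 := fun h => hx₀ (by simp [h])
  by_contra h
  push_neg at h
  -- normalization
  have hnorm : ∀ x : X, x ≠ 0 → ‖((‖x‖ : 𝕜)⁻¹ • x)‖ = 1 := by
    intro x hx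
    rw [norm_smul, norm_inv, RCLike.norm_ofReal, abs_of_nonneg (norm_nonneg x),
      inv_mul_cancel₀ (norm_ne_zero_iff.2 hx)]
  rcases le_or_gt 0 (1 - δ) with hle | hlt
  · have hb : ‖G‖ ≤ 1 - δ := by
      refine G.opNorm_le_bound hle fun x => ?_
      rcases eq_or_ne x 0 with rfl | hx
      · simp
      · have h1 := h _ (hnorm x hx)
        rw [map_smul, norm_smul, norm_inv, RCLike.norm_ofReal,
          abs_of_nonneg (norm_nonneg x)] at h1
        have hxpos : (0 : ℝ) < ‖x‖ := norm_pos_iff.2 hx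
        calc ‖G x‖ = ‖x‖ * (‖x‖⁻¹ * ‖G x‖) := by field_simp
          _ ≤ ‖x‖ * (1 - δ) := by
              exact mul_le_mul_of_nonneg_left h1 (le_of_lt hxpos)
          _ = (1 - δ) * ‖x‖ := mul_comm _ _
    rw [hG] at hb
    linarith
  · have h1 := h _ (hnorm x₀ hx₀ne)
    have := norm_nonneg (G ((‖x₀‖ : 𝕜)⁻¹ • x₀))
    linarith

lemma gSet_nonempty (G : X →L[𝕜] Y) (hG : ‖G‖ = 1) (T : X →L[𝕜] Y) {δ : ℝ} (hδ : 0 < δ) :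
    (gSet G T δ).Nonempty := by
  obtain ⟨x, hx1, hx2⟩ := exists_unit_vector G hG hδ
  exact ⟨‖T x‖, x, hx1, hx2, rfl⟩

lemma gSet_sSup_nonneg (G : X →L[𝕜] Y) (hG : ‖G‖ = 1) (T : X →L[𝕜] Y) {δ : ℝ} (hδ : 0 < δ) :
    0 ≤ sSup (gSet G T δ) := by
  obtain ⟨x, hx1, hx2⟩ := exists_unit_vector G hG hδ
  exact le_trans (norm_nonneg (T x)) (le_csSup (gSet_bddAbove G T δ) ⟨x, hx1, hx2, rfl⟩)

lemma Gnorm_le_sSup (G : X →L[𝕜] Y) (hG : ‖G‖ = 1) (T : X →L[𝕜] Y) {δ : ℝ} (hδ : 0 < δ) :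
    Gnorm G T ≤ sSup (gSet G T δ) := by
  rw [Gnorm_eq]
  refine ciInf_le ⟨0, ?_⟩ (⟨δ, hδ⟩ : {δ : ℝ // 0 < δ})
  rintro r ⟨δ', rfl⟩
  exact gSet_sSup_nonneg G hG T δ'.2

lemma le_Gnorm (G T : X →L[𝕜] Y) {a : ℝ}
    (h : ∀ δ : ℝ, 0 < δ → a ≤ sSup (gSet G T δ)) : a ≤ Gnorm G T := by
  rw [Gnorm_eq]
  exact le_ciInf fun δ => h δ δ.2

lemma norm_apply_le_sSup (G T : X →L[𝕜] Y) {δ : ℝ} {x : X} (hx : ‖x‖ = 1)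
    (hGx : 1 - δ < ‖G x‖) : ‖T x‖ ≤ sSup (gSet G T δ) :=
  le_csSup (gSet_bddAbove G T δ) ⟨x, hx, hGx, rfl⟩

/-- Every element of `Cset G` is bounded by the `G`-norm. -/
lemma Cset_norm_le (G : X →L[𝕜] Y) {ψ : (X →L[𝕜] Y) →L[𝕜] 𝕜} (hψ : ψ ∈ Cset G)
    (T : X →L[𝕜] Y) : ‖ψ T‖ ≤ Gnorm G T := by
  obtain ⟨-, ι, l, hne, x, y, hx, hy, hGx, hlim⟩ := hψ
  haveI := hne
  refine le_Gnorm G T fun δ hδ => ?_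
  have hev : ∀ᶠ i in l, 1 - δ < ‖G (x i)‖ :=
    hGx.eventually (eventually_gt_nhds (by linarith))
  have hlim' : Tendsto (fun i => ‖(y i) (T (x i))‖) l (𝓝 ‖ψ T‖) := (hlim T).norm
  refine le_of_tendsto hlim' ?_
  filter_upwards [hev] with i hi
  calc ‖(y i) (T (x i))‖ ≤ ‖y i‖ * ‖T (x i)‖ := (y i).le_opNorm _
    _ = ‖T (x i)‖ := by rw [hy i, one_mul]
    _ ≤ _ := norm_apply_le_sSup G T (hx i) hi

/-- Key existence lemma: `Cset G` contains functionals whose real part at `T`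
nearly attains the `G`-norm of `T`. -/
lemma exists_mem_Cset (G : X →L[𝕜] Y) (hG : ‖G‖ = 1) (T : X →L[𝕜] Y) {ε : ℝ} (hε : 0 < ε) :
    ∃ ψ ∈ Cset G, Gnorm G T - ε ≤ RCLike.re (ψ T) := by
  have hGne : G ≠ 0 := by
    intro h; rw [h, norm_zero] at hG; norm_num at hG
  obtain ⟨x₀, hx₀⟩ : ∃ x : X, G x ≠ 0 := by
    by_contra h
    push_neg at h
    exact hGne (ContinuousLinearMap.ext fun x => by simp [h x])
  haveI : Nontrivial Y := nontrivial_of_ne (G x₀) 0 hx₀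
  -- choose good unit vectors
  have hsel : ∀ n : ℕ, ∃ x : X, ‖x‖ = 1 ∧ 1 - 1 / ((n : ℝ) + 1) < ‖G x‖ ∧
      Gnorm G T - ε < ‖T x‖ := by
    intro n
    have hδ : (0 : ℝ) < 1 / ((n : ℝ) + 1) := by positivity
    have h1 : Gnorm G T - ε < sSup (gSet G T (1 / ((n : ℝ) + 1))) :=
      lt_of_lt_of_le (by linarith) (Gnorm_le_sSup G hG T hδ)
    obtain ⟨r, hr, hr2⟩ := exists_lt_of_lt_csSup (gSet_nonempty G hG T hδ) h1
    obtain ⟨x, hx1, hx2, rfl⟩ := hr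
    exact ⟨x, hx1, hx2, hr2⟩
  choose x hx1 hx2 hx3 using hsel
  have hsel2 : ∀ n : ℕ, ∃ g : Y →L[𝕜] 𝕜, ‖g‖ = 1 ∧ g (T (x n)) = (‖T (x n)‖ : 𝕜) :=
    fun n => exists_dual_vector' 𝕜 (T (x n))
  choose y hy1 hy2 using hsel2
  -- the rank-one functionals
  let ψn : ℕ → ((X →L[𝕜] Y) →L[𝕜] 𝕜) :=
    fun n => (y n).comp ((ContinuousLinearMap.apply 𝕜 Y) (x n))
  have hψn_apply : ∀ n S, ψn n S = (y n) (S (x n)) := fun n S => rfl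
  have hψn_norm : ∀ n, ‖ψn n‖ ≤ 1 := by
    intro n
    refine ContinuousLinearMap.opNorm_le_bound _ zero_le_one fun S => ?_
    rw [hψn_apply]
    calc ‖(y n) (S (x n))‖ ≤ ‖y n‖ * ‖S (x n)‖ := (y n).le_opNorm _
      _ = ‖S (x n)‖ := by rw [hy1 n, one_mul]
      _ ≤ ‖S‖ * ‖x n‖ := S.le_opNorm _
      _ = 1 * ‖S‖ := by rw [hx1 n, mul_one, one_mul]
  -- ultrafilter limit via Banach-Alaoglu
  let U : Ultrafilter ℕ := Ultrafilter.of atTop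
  have hU : (U : Filter ℕ) ≤ atTop := Ultrafilter.of_le _
  have hcpt : IsCompact (WeakDual.toStrongDual ⁻¹'
      Metric.closedBall (0 : StrongDual 𝕜 (X →L[𝕜] Y)) 1) :=
    WeakDual.isCompact_closedBall (𝕜 := 𝕜) (0 : StrongDual 𝕜 (X →L[𝕜] Y)) 1
  have hmem : ∀ n : ℕ, StrongDual.toWeakDual (ψn n) ∈
      WeakDual.toStrongDual ⁻¹' Metric.closedBall 0 1 := by
    intro n
    simp only [Set.mem_preimage, Metric.mem_closedBall, dist_zero_right]
    exact (dist_zero_right (ψn n : (X →L[𝕜] Y) →L[𝕜] 𝕜)).trans_le (hψn_norm n)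
  obtain ⟨ψW, hψW, hlimW⟩ := hcpt.ultrafilter_le_nhds
    (U.map fun n => StrongDual.toWeakDual (ψn n))
    (le_principal_iff.mpr (Filter.mem_map.mpr (Filter.univ_mem' hmem)))
  have hlimW' : Tendsto (fun n => StrongDual.toWeakDual (ψn n)) (U : Filter ℕ)
      (𝓝 ψW) := hlimW
  set ψ : (X →L[𝕜] Y) →L[𝕜] 𝕜 := WeakDual.toStrongDual ψW with hψdef
  have hψnorm : ‖ψ‖ ≤ 1 := by
    simp only [Set.mem_preimage, Metric.mem_closedBall] at hψW
    exact (dist_zero_right ψ).symm.trans_le hψW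
  have heval : ∀ S : X →L[𝕜] Y, Tendsto (fun n => ψn n S) (U : Filter ℕ) (𝓝 (ψ S)) := by
    intro S
    have := ((WeakDual.eval_continuous (𝕜 := 𝕜) S).tendsto ψW).comp hlimW'
    exact this
  -- convergence of ‖G xₙ‖ to 1
  have hGtend : Tendsto (fun n : ℕ => ‖G (x n)‖) atTop (𝓝 1) := by
    have hlow : Tendsto (fun n : ℕ => 1 - 1 / ((n : ℝ) + 1)) atTop (𝓝 1) := by
      have h1 := tendsto_one_div_add_atTop_nhds_zero_nat (𝕜 := ℝ)
      have h2 : Tendsto (fun n : ℕ => 1 - 1 / ((n : ℝ) + 1)) atTop (𝓝 (1 - 0)) :=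
        (tendsto_const_nhds (x := (1 : ℝ))).sub h1
      simpa using h2
    refine tendsto_of_tendsto_of_tendsto_of_le_of_le hlow tendsto_const_nhds
      (fun n => le_of_lt (hx2 n)) (fun n => ?_)
    calc ‖G (x n)‖ ≤ ‖G‖ * ‖x n‖ := G.le_opNorm _
      _ = 1 := by rw [hG, hx1 n, mul_one]
  refine ⟨ψ, ⟨hψnorm, ULift.{max u v w} ℕ, (U : Filter ℕ).map ULift.up, ?_, fun i => x i.down,
    fun i => y i.down, fun i => hx1 _, fun i => hy1 _, ?_, ?_⟩, ?_⟩
  · exact Filter.NeBot.map U.neBot ULift.up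
  · exact Filter.tendsto_map'_iff.2 (hGtend.mono_left hU)
  · intro S
    exact Filter.tendsto_map'_iff.2 (heval S)
  · -- the lower bound on the real part
    refine ge_of_tendsto ((RCLike.continuous_re.tendsto _).comp (heval T)) ?_
    refine Filter.univ_mem' fun n => ?_
    show Gnorm G T - ε ≤ RCLike.re (ψn n T)
    rw [hψn_apply, hy2 n, RCLike.ofReal_re]
    exact le_of_lt (hx3 n)

/-- The weak-star dual is locally convex over `ℝ`. -/
instance weakDualLocallyConvex {F : Type*} [NormedAddCommGroup F] [NormedSpace 𝕜 F] :
    LocallyConvexSpace ℝ (WeakDual 𝕜 F) :=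
  WeakBilin.locallyConvexSpace (B := topDualPairing 𝕜 F)

/-- Every `ℝ`-linear continuous functional on the weak-star dual is of the form
`ψ ↦ re (ψ T)` for some `T`. -/
lemma weakdual_repr {F : Type*} [NormedAddCommGroup F] [NormedSpace 𝕜 F]
    (f : WeakDual 𝕜 F →L[ℝ] ℝ) : ∃ T : F, ∀ ψ : WeakDual 𝕜 F, f ψ = RCLike.re (ψ T) := by
  classical
  have hb := LinearMap.hasBasis_weakBilin (topDualPairing 𝕜 F)
  have h0 : f ⁻¹' (Set.Ioo (-1 : ℝ) 1) ∈ 𝓝 (0 : WeakDual 𝕜 F) := by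
    have hmem : Set.Ioo (-1 : ℝ) 1 ∈ 𝓝 (f 0) := by
      rw [map_zero]
      exact Ioo_mem_nhds (by norm_num) (by norm_num)
    exact f.continuous.continuousAt.preimage_mem_nhds hmem
  replace h0 := hb.mem_iff.mp h0
  obtain ⟨V, hV, hVsub⟩ := h0
  obtain ⟨s, r, hr, hVeq⟩ := (SeminormFamily.basisSets_iff _).mp hV
  rw [hVeq] at hVsub
  -- evaluation vanishing on `s` forces `f` to vanish
  have key : ∀ ψ : WeakDual 𝕜 F, (∀ T ∈ s, ψ T = 0) → f ψ = 0 := by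
    intro ψ hz
    by_contra hne
    have hmem : ∀ c : ℝ, (c • ψ) ∈
        Seminorm.ball (s.sup ((topDualPairing 𝕜 F).toSeminormFamily)) 0 r := by
      intro c
      refine (Seminorm.mem_ball_zero (p := s.sup ((topDualPairing 𝕜 F).toSeminormFamily))).2 ?_
      refine Seminorm.finset_sup_apply_lt hr fun T hT => ?_
      show ‖c • (ψ T)‖ < r
      rw [hz T hT, smul_zero, norm_zero]
      exact hr
    have hlt : ∀ c : ℝ, c * f ψ < 1 := by
      intro c
      have := hVsub (hmem c)
      change f (c • ψ) ∈ Set.Ioo (-1) 1 at this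
      simp only [Set.mem_preimage, Set.mem_Ioo, map_smul, smul_eq_mul] at this
      exact this.2
    have := hlt (2 / f ψ)
    rw [div_mul_cancel₀ 2 hne] at this
    norm_num at this
  -- linear algebra: `f` is a combination of real/imaginary parts of evaluations
  let ev : F → (WeakDual 𝕜 F →ₗ[ℝ] 𝕜) := fun T =>
    { toFun := fun ψ => ψ T
      map_add' := fun _ _ => rfl
      map_smul' := fun _ _ => rfl }
  let L : ({T // T ∈ s} × Bool) → (WeakDual 𝕜 F →ₗ[ℝ] ℝ) := fun p =>
    (if p.2 then RCLike.reLm else RCLike.imLm).comp (ev p.1)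
  have hker : (⨅ p, LinearMap.ker (L p)) ≤ LinearMap.ker (f : WeakDual 𝕜 F →ₗ[ℝ] ℝ) := by
    intro ψ hψ
    rw [Submodule.mem_iInf] at hψ
    rw [LinearMap.mem_ker]
    refine key ψ fun T hT => ?_
    have h1 := hψ (⟨T, hT⟩, true)
    have h2 := hψ (⟨T, hT⟩, false)
    rw [LinearMap.mem_ker] at h1 h2
    simp only [L, if_pos, if_neg, Bool.false_eq_true, not_false_iff, LinearMap.comp_apply] at h1 h2
    have h1' : RCLike.re (ψ T) = 0 := h1
    have h2' : RCLike.im (ψ T) = 0 := h2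
    exact RCLike.ext (by simpa using h1') (by simpa using h2')
  have hspan := mem_span_of_iInf_ker_le_ker (𝕜 := ℝ) hker
  rw [Submodule.mem_span_range_iff_exists_fun] at hspan
  obtain ⟨c, hc⟩ := hspan
  refine ⟨∑ p : {T // T ∈ s} × Bool,
      (((if p.2 then c p else -(c p) : ℝ) : 𝕜) * (if p.2 then 1 else RCLike.I)) • (p.1 : F),
    fun ψ => ?_⟩
  have happ : f ψ = ∑ p : {T // T ∈ s} × Bool, c p * (L p ψ) := by
    have h4 : f ψ = (∑ p : {T // T ∈ s} × Bool, c p • L p) ψ := by rw [hc]; rfl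
    rw [h4, LinearMap.sum_apply]
    simp [smul_eq_mul]
  rw [happ, map_sum]
  rw [← RCLike.reLm_coe, map_sum]
  refine Finset.sum_congr rfl fun p _ => ?_
  have hsm : ψ ((((if p.2 then c p else -(c p) : ℝ) : 𝕜) * (if p.2 then 1 else RCLike.I)) •
      (p.1 : F)) = (((if p.2 then c p else -(c p) : ℝ) : 𝕜) * (if p.2 then 1 else RCLike.I)) *
      ψ (p.1 : F) := by
    rw [map_smul, smul_eq_mul]
  rw [RCLike.reLm_coe, hsm]
  rcases p with ⟨T, b⟩
  cases b
  · simp only [Bool.false_eq_true, if_neg, not_false_iff, if_false]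
    rw [mul_assoc, RCLike.re_ofReal_mul, RCLike.I_mul_re]
    simp only [L, Bool.false_eq_true, if_false, LinearMap.comp_apply]
    have : RCLike.imLm (ev (T : F) ψ) = RCLike.im (ψ (T : F)) := rfl
    rw [this]
    ring
  · simp only [if_pos, if_true]
    rw [mul_one, RCLike.re_ofReal_mul]
    simp only [L, if_true, LinearMap.comp_apply]
    have : RCLike.reLm (ev (T : F) ψ) = RCLike.re (ψ (T : F)) := rfl
    rw [this]

end Aux

/-- The unit ball of the dual of `(L(X,Y), ‖·‖_G)` is the weak*-closed convex hull of `C`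
(the closure being taken in the weak* topology of `L(X,Y)*`). -/
theorem stmt_13 {X : Type v} {Y : Type w}
    [NormedAddCommGroup X] [NormedSpace 𝕜 X] [CompleteSpace X]
    [NormedAddCommGroup Y] [NormedSpace 𝕜 Y] [CompleteSpace Y]
    (G : X →L[𝕜] Y) (hG : ‖G‖ = 1)
    (hGnorm : ∀ T : X →L[𝕜] Y, Gnorm G T = 0 → T = 0) :
    StrongDual.toWeakDual ''
        {φ : (X →L[𝕜] Y) →L[𝕜] 𝕜 | ∀ T : X →L[𝕜] Y, ‖φ T‖ ≤ Gnorm G T}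
      = closure (StrongDual.toWeakDual '' (convexHull ℝ (Cset G))) := by
  classical
  have hBconv : Convex ℝ {φ : (X →L[𝕜] Y) →L[𝕜] 𝕜 | ∀ T : X →L[𝕜] Y, ‖φ T‖ ≤ Gnorm G T} := by
    intro φ₁ h1 φ₂ h2 a b ha hb hab
    intro T
    have happ : (a • φ₁ + b • φ₂) T = a • (φ₁ T) + b • (φ₂ T) := rfl
    rw [happ]
    calc ‖a • (φ₁ T) + b • (φ₂ T)‖ ≤ ‖a • (φ₁ T)‖ + ‖b • (φ₂ T)‖ := norm_add_le _ _
      _ = a * ‖φ₁ T‖ + b * ‖φ₂ T‖ := by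
          rw [norm_smul, norm_smul, Real.norm_of_nonneg ha, Real.norm_of_nonneg hb]
      _ ≤ a * Gnorm G T + b * Gnorm G T := by
          gcongr
          exacts [h1 T, h2 T]
      _ = Gnorm G T := by rw [← add_mul, hab, one_mul]
  refine Set.Subset.antisymm ?_ ?_
  · -- the unit ball is contained in the closed convex hull
    rintro _ ⟨φ, hφ, rfl⟩
    by_contra hnot
    have hconv := Convex.closure (𝕜 := ℝ) (E := WeakDual 𝕜 (X →L[𝕜] Y)) (s := StrongDual.toWeakDual ''
        (convexHull ℝ (Cset G))) (by
      exact ((convex_convexHull ℝ (Cset G)).is_linear_image ⟨fun _ _ => rfl, fun _ _ => rfl⟩))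
    obtain ⟨f, u, hfu, hux⟩ := geometric_hahn_banach_closed_point (E := WeakDual 𝕜 (X →L[𝕜] Y)) hconv isClosed_closure hnot
    obtain ⟨T₀, hT₀⟩ := weakdual_repr (F := X →L[𝕜] Y) f
    have hC : ∀ ψ ∈ Cset G, RCLike.re (ψ T₀) < u := by
      intro ψ hψ
      have hmem : StrongDual.toWeakDual ψ ∈ closure (StrongDual.toWeakDual ''
          (convexHull ℝ (Cset G))) :=
        subset_closure ⟨ψ, subset_convexHull ℝ _ hψ, rfl⟩
      have := hfu _ hmem
      rwa [hT₀] at this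
    have hle : Gnorm G T₀ ≤ u := by
      by_contra hgt
      push_neg at hgt
      obtain ⟨ψ, hψ, hψ2⟩ := exists_mem_Cset G hG T₀ (ε := Gnorm G T₀ - u) (by linarith)
      have := hC ψ hψ
      linarith
    have h1 : u < RCLike.re (φ T₀) := by
      have := hux
      rwa [hT₀] at this
    have h2 : RCLike.re (φ T₀) ≤ ‖φ T₀‖ := RCLike.re_le_norm _
    have h3 := hφ T₀
    linarith
  · -- the closed convex hull is contained in the unit ball
    have himg : StrongDual.toWeakDual ''
        {φ : (X →L[𝕜] Y) →L[𝕜] 𝕜 | ∀ T : X →L[𝕜] Y, ‖φ T‖ ≤ Gnorm G T}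
        = {ψ : WeakDual 𝕜 (X →L[𝕜] Y) | ∀ T : X →L[𝕜] Y, ‖ψ T‖ ≤ Gnorm G T} := by
      ext ψ
      constructor
      · rintro ⟨φ, hφ, rfl⟩
        exact hφ
      · intro h
        exact ⟨WeakDual.toStrongDual ψ, h, rfl⟩
    rw [himg]
    refine closure_minimal ?_ ?_
    · rintro _ ⟨φ, hφ, rfl⟩
      have hsub : convexHull ℝ (Cset G) ⊆
          {φ : (X →L[𝕜] Y) →L[𝕜] 𝕜 | ∀ T : X →L[𝕜] Y, ‖φ T‖ ≤ Gnorm G T} :=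
        convexHull_min (fun ψ hψ => Cset_norm_le G hψ) hBconv
      exact hsub hφ
    · have hset : {ψ : WeakDual 𝕜 (X →L[𝕜] Y) | ∀ T : X →L[𝕜] Y, ‖ψ T‖ ≤ Gnorm G T}
          = ⋂ T : X →L[𝕜] Y, {ψ : WeakDual 𝕜 (X →L[𝕜] Y) | ‖ψ T‖ ≤ Gnorm G T} := by
        ext ψ
        simp [Set.mem_iInter]
      rw [hset]
      refine isClosed_iInter fun T => ?_
      exact isClosed_le (continuous_norm.comp (WeakDual.eval_continuous T)) continuous_const
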